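/- If (Y,S) is a POD (proximal orbit dense) minimal dynamical system and (X,T) is a minimal dynamical system such that (Y,S) is not a factor of (X,T), then (X,T) and (Y,S) are disjoint, i.e., the only closed (T×S)-invariant subset of X×Y projecting onto both factors is X×Y itself. -/

import Mathlib

/-- The group of self-homeomorphisms under composition, so that `T ^ n` (`n : ℤ`)
denotes the `n`-th iterate of `T`. -/
instance Homeomorph.instGroupSelf {X : Type*} [TopologicalSpace X] : Group (X ≃ₜ X) where
  mul f g := g.trans f
  one := Homeomorph.refl X
  inv := Homeomorph.symm
  mul_assoc _ _ _ := Homeomorph.ext fun _ => rfl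
  one_mul _ := Homeomorph.ext fun _ => rfl
  mul_one _ := Homeomorph.ext fun _ => rfl
  inv_mul_cancel f := Homeomorph.ext fun x => f.symm_apply_apply x

/-- The orbit closure of a point under a homeomorphism. -/
def orbitCl {X : Type*} [TopologicalSpace X] (T : X ≃ₜ X) (p : X) : Set X :=
  closure {q | ∃ n : ℤ, (T ^ n) p = q}

/-- A (minimal) dynamical system: every orbit closure is everything. -/
def IsMinimalSys {X : Type*} [TopologicalSpace X] (T : X ≃ₜ X) : Prop :=
  ∀ x : X, orbitCl T x = Set.univ

/-- Totally minimal: every nonzero power is minimal. -/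
def IsTotallyMinimal {X : Type*} [TopologicalSpace X] (T : X ≃ₜ X) : Prop :=
  ∀ n : ℤ, n ≠ 0 → IsMinimalSys (T ^ n)

/-- The graph Γ_n = {(T^n x, x) : x ∈ X}. -/
def graphPow {X : Type*} [TopologicalSpace X] (T : X ≃ₜ X) (n : ℤ) : Set (X × X) :=
  {p | ∃ x : X, p = ((T ^ n) x, x)}

/-- POD: totally minimal and for distinct u, v some graph Γ_n (n ≠ 0) lies in the
orbit closure of (u, v) under T × T. -/
def IsPOD {X : Type*} [TopologicalSpace X] (T : X ≃ₜ X) : Prop :=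
  IsMinimalSys T ∧ IsTotallyMinimal T ∧
    ∀ u v : X, u ≠ v → ∃ n : ℤ, n ≠ 0 ∧
      graphPow T n ⊆ orbitCl (T.prodCongr T) (u, v)

/-- Doubly minimal: minimal, and every orbit closure of T × T is either everything
or a graph Γ_m. -/
def IsDoublyMinimal {X : Type*} [TopologicalSpace X] (T : X ≃ₜ X) : Prop :=
  IsMinimalSys T ∧
    ∀ p : X × X, orbitCl (T.prodCongr T) p = Set.univ ∨
      ∃ m : ℤ, orbitCl (T.prodCongr T) p = graphPow T m

/-- A factor map: continuous equivariant surjection. -/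
def IsFactorMap {X Y : Type*} [TopologicalSpace X] [TopologicalSpace Y]
    (T : X ≃ₜ X) (S : Y ≃ₜ Y) (π : X → Y) : Prop :=
  Continuous π ∧ Function.Surjective π ∧ ∀ x, π (T x) = S (π x)

/-- Disjointness: the only closed invariant subset of the product projecting
onto both coordinates is the whole product. -/
def SysDisjoint {X Y : Type*} [TopologicalSpace X] [TopologicalSpace Y]
    (T : X ≃ₜ X) (S : Y ≃ₜ Y) : Prop :=
  ∀ M : Set (X × Y), IsClosed M → (T.prodCongr S) '' M = M →
    Prod.fst '' M = Set.univ → Prod.snd '' M = Set.univ → M = Set.univ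

/-- A recurrent point: in the closure of its forward orbit with positive times. -/
def IsRecurrentPt {X : Type*} [TopologicalSpace X] (T : X ≃ₜ X) (x : X) : Prop :=
  x ∈ closure {q | ∃ n : ℕ, 1 ≤ n ∧ (T ^ n) x = q}

/-- A proximal pair: the orbits come arbitrarily close together. -/
def IsProximal {X : Type*} [PseudoMetricSpace X] (T : X ≃ₜ X) (x x' : X) : Prop :=
  ∀ ε > 0, ∃ n : ℤ, dist ((T ^ n) x) ((T ^ n) x') < ε

/-- A distal point: proximal only to itself. -/
def IsDistalPt {X : Type*} [PseudoMetricSpace X] (T : X ≃ₜ X) (x : X) : Prop :=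
  ∀ x', IsProximal T x x' → x' = x

/-- A minimal subset: nonempty, closed, invariant, with all orbits dense in it. -/
def IsMinimalSubset {X : Type*} [TopologicalSpace X] (T : X ≃ₜ X) (M : Set X) : Prop :=
  M.Nonempty ∧ IsClosed M ∧ (T : X ≃ₜ X) '' M = M ∧
    ∀ p ∈ M, M ⊆ closure {q | ∃ n : ℤ, (T ^ n) p = q}

/-- Topological transitivity. -/
def IsTopTransitive {X : Type*} [TopologicalSpace X] (T : X ≃ₜ X) : Prop :=
  ∀ U V : Set X, IsOpen U → IsOpen V → U.Nonempty → V.Nonempty →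
    ∃ n : ℤ, ((T ^ n) '' U ∩ V).Nonempty

/-- Weak mixing: the product system is topologically transitive. -/
def IsWeaklyMixing {X : Type*} [TopologicalSpace X] (T : X ≃ₜ X) : Prop :=
  IsTopTransitive (T.prodCongr T)

section Helpers
open Set
variable {X : Type*} [TopologicalSpace X]

lemma homeo_mul_apply (f g : X ≃ₜ X) (x : X) : (f * g) x = f (g x) := rfl
lemma homeo_coe_mul (f g : X ≃ₜ X) : ⇑(f * g) = f ∘ g := rfl
lemma homeo_inv_apply (f : X ≃ₜ X) : ((f⁻¹ : X ≃ₜ X) : X → X) = f.symm := rfl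

lemma image_inv_eq {f : X ≃ₜ X} {A : Set X} (hA : f '' A = A) : (f⁻¹ : X ≃ₜ X) '' A = A := by
  rw [show ((f⁻¹ : X ≃ₜ X) : X → X) = f.symm from rfl, Homeomorph.image_symm]
  conv_lhs => rw [← hA]
  exact f.injective.preimage_image A

lemma image_zpow_eq {f : X ≃ₜ X} {A : Set X} (hA : f '' A = A) (n : ℤ) : (f ^ n) '' A = A := by
  let H : Subgroup (X ≃ₜ X) :=
    { carrier := {g | g '' A = A}
      one_mem' := by simp [Set.image_id', show ⇑(1 : X ≃ₜ X) = id from rfl]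
      mul_mem' := by
        intro a b ha hb
        show (a * b) '' A = A
        rw [homeo_coe_mul, Set.image_comp, hb, ha]
      inv_mem' := by
        intro a ha
        exact image_inv_eq ha }
  exact H.zpow_mem hA n

lemma preimage_of_image_eq {f : X ≃ₜ X} {A : Set X} (hA : f '' A = A) : f ⁻¹' A = A := by
  conv_lhs => rw [← hA]; exact f.injective.preimage_image A

lemma mem_iff_image_mem {f : X ≃ₜ X} {A : Set X} (hA : f '' A = A) (x : X) :
    f x ∈ A ↔ x ∈ A := by
  constructor
  · intro h; have := preimage_of_image_eq hA; rw [← this]; exact h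
  · intro h; rw [← hA]; exact ⟨x, h, rfl⟩

/-- the orbit set -/
lemma orbit_image (f : X ≃ₜ X) (p : X) :
    f '' {q | ∃ n : ℤ, (f ^ n) p = q} = {q | ∃ n : ℤ, (f ^ n) p = q} := by
  ext q
  constructor
  · rintro ⟨r, ⟨n, rfl⟩, rfl⟩
    exact ⟨n + 1, by rw [add_comm, zpow_add, zpow_one, homeo_mul_apply]⟩
  · rintro ⟨n, rfl⟩
    refine ⟨(f ^ (n - 1)) p, ⟨n - 1, rfl⟩, ?_⟩
    rw [show (f : X ≃ₜ X) ((f ^ (n-1)) p) = (f * f ^ (n - 1)) p from rfl, ← zpow_one_add]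
    ring_nf

lemma mem_orbitCl (f : X ≃ₜ X) (p : X) : p ∈ orbitCl f p :=
  subset_closure ⟨0, rfl⟩

lemma orbitCl_image (f : X ≃ₜ X) (p : X) : f '' orbitCl f p = orbitCl f p := by
  rw [orbitCl, Homeomorph.image_closure, orbit_image]

lemma orbitCl_subset {f : X ≃ₜ X} {A : Set X} (hAc : IsClosed A) (hA : f '' A = A)
    {p : X} (hp : p ∈ A) : orbitCl f p ⊆ A := by
  apply closure_minimal _ hAc
  rintro q ⟨n, rfl⟩
  rw [← image_zpow_eq hA n]
  exact ⟨p, hp, rfl⟩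
end Helpers

section Helpers2
open Set
variable {X : Type*} [TopologicalSpace X]

lemma minimal_closed_inv {f : X ≃ₜ X} (hf : IsMinimalSys f) {A : Set X}
    (hAc : IsClosed A) (hA : f '' A = A) (hne : A.Nonempty) : A = Set.univ := by
  obtain ⟨p, hp⟩ := hne
  exact Set.eq_univ_of_univ_subset ((hf p) ▸ orbitCl_subset hAc hA hp)

lemma exists_minimal_subset [CompactSpace X] (f : X ≃ₜ X) {C : Set X}
    (hCc : IsClosed C) (hCi : f '' C = C) (hne : C.Nonempty) :
    ∃ W, W ⊆ C ∧ W.Nonempty ∧ IsClosed W ∧ f '' W = W ∧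
      ∀ p ∈ W, W ⊆ closure {q | ∃ n : ℤ, (f ^ n) p = q} := by
  set S : Set (Set X) := {D | D.Nonempty ∧ IsClosed D ∧ f '' D = D} with hSdef
  have hzorn := zorn_superset_nonempty S ?_ C ⟨hne, hCc, hCi⟩
  · obtain ⟨W, hWC, hWS, hWmin⟩ := hzorn
    obtain ⟨hWne, hWc, hWi⟩ := hWS
    refine ⟨W, hWC, hWne, hWc, hWi, ?_⟩
    intro p hp
    have horb : orbitCl f p ∈ S :=
      ⟨⟨p, mem_orbitCl f p⟩, isClosed_closure, orbitCl_image f p⟩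
    exact hWmin horb (orbitCl_subset hWc hWi hp)
  · intro c hcS hchain hcne
    obtain ⟨D₀, hD₀⟩ := hcne
    haveI : Nonempty c := ⟨⟨D₀, hD₀⟩⟩
    set t : c → Set X := fun D => (D : Set X)
    have hdir : Directed (· ⊇ ·) t := by
      intro a b
      rcases hchain.total a.2 b.2 with h | h
      · exact ⟨a, le_refl _, h⟩
      · exact ⟨b, h, le_refl _⟩
    have hne' : ∀ D : c, (t D).Nonempty := fun D => (hcS D.2).1
    have hcl : ∀ D : c, IsClosed (t D) := fun D => (hcS D.2).2.1
    have hcp : ∀ D : c, IsCompact (t D) := fun D => (hcl D).isCompact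
    have hInt : (⋂ D : c, t D).Nonempty :=
      IsCompact.nonempty_iInter_of_directed_nonempty_isCompact_isClosed t hdir hne' hcp hcl
    refine ⟨⋂ D : c, t D, ⟨hInt, isClosed_iInter hcl, ?_⟩, fun D hD => iInter_subset_of_subset ⟨D, hD⟩ le_rfl⟩
    rw [f.injective.injOn.image_iInter_eq]
    exact iInter_congr fun D => (hcS D.2).2.2

end Helpers2

section ProdHelpers
variable {X Y : Type*} [TopologicalSpace X] [TopologicalSpace Y]

def prodCongrHom : (X ≃ₜ X) × (Y ≃ₜ Y) →* ((X × Y) ≃ₜ (X × Y)) where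
  toFun p := p.1.prodCongr p.2
  map_one' := Homeomorph.ext fun _ => rfl
  map_mul' _ _ := Homeomorph.ext fun _ => rfl

lemma prodCongr_zpow (T : X ≃ₜ X) (S : Y ≃ₜ Y) (n : ℤ) :
    (T.prodCongr S) ^ n = (T ^ n).prodCongr (S ^ n) := by
  have : (T.prodCongr S) = prodCongrHom (T, S) := rfl
  rw [this, ← map_zpow]
  rfl

lemma prodCongr_zpow_apply (T : X ≃ₜ X) (S : Y ≃ₜ Y) (n : ℤ) (p : X × Y) :
    ((T.prodCongr S) ^ n) p = ((T ^ n) p.1, (S ^ n) p.2) := by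
  rw [prodCongr_zpow]; rfl
end ProdHelpers


theorem pod_disjoint {X Y : Type*} [MetricSpace X] [CompactSpace X] [MetricSpace Y] [CompactSpace Y]
    (T : X ≃ₜ X) (S : Y ≃ₜ Y) (hS : IsPOD S) (hT : IsMinimalSys T)
    (hnf : ¬ ∃ π : X → Y, IsFactorMap T S π) :
    SysDisjoint T S := by
  intro M hMc hMi hfst hsnd
  rcases isEmpty_or_nonempty X with hX | hX
  · exact Set.eq_univ_of_forall fun p => (IsEmpty.false p.1).elim
  rcases isEmpty_or_nonempty Y with hY | hY
  · exact Set.eq_univ_of_forall fun p => (IsEmpty.false p.2).elim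
  obtain ⟨hSmin, hStot, hSpod⟩ := hS
  set R : (X × Y) ≃ₜ (X × Y) := T.prodCongr S with hRdef
  -- M is nonempty
  have hMne : M.Nonempty := by
    obtain ⟨x⟩ := hX
    have : x ∈ Prod.fst '' M := hfst ▸ Set.mem_univ x
    obtain ⟨p, hp, -⟩ := this
    exact ⟨p, hp⟩
  -- take a minimal subset W of M
  obtain ⟨W, hWM, hWne, hWc, hWi, hWd⟩ := exists_minimal_subset R hMc hMi hMne
  have hWmem : ∀ q, R q ∈ W ↔ q ∈ W := mem_iff_image_mem hWi
  -- projections of W are full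
  have hWfst : Prod.fst '' W = Set.univ := by
    refine minimal_closed_inv hT ((hWc.isCompact.image continuous_fst).isClosed) ?_
      (hWne.image _)
    conv_rhs => rw [← hWi]
    rw [Set.image_image, Set.image_image]
    rfl
  have hWsnd : Prod.snd '' W = Set.univ := by
    refine minimal_closed_inv hSmin ((hWc.isCompact.image continuous_snd).isClosed) ?_
      (hWne.image _)
    conv_rhs => rw [← hWi]
    rw [Set.image_image, Set.image_image]
    rfl
  by_cases hgr : ∃ x y y', y ≠ y' ∧ (x, y) ∈ W ∧ (x, y') ∈ W
  · -- nontrivial fiber: use POD to show W = X × Y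
    obtain ⟨x₀, y₀, y₀', hyy, h1, h2⟩ := hgr
    obtain ⟨n, hn0, hΓ⟩ := hSpod y₀ y₀' hyy
    -- the set of pairs (y, y') sharing a fiber point
    set N : Set (X × (Y × Y)) := {p | (p.1, p.2.1) ∈ W ∧ (p.1, p.2.2) ∈ W} with hNdef
    have hNc : IsClosed N :=
      (hWc.preimage (by fun_prop : Continuous fun p : X × (Y × Y) => (p.1, p.2.1))).inter
        (hWc.preimage (by fun_prop : Continuous fun p : X × (Y × Y) => (p.1, p.2.2)))
    set Q : (X × (Y × Y)) ≃ₜ (X × (Y × Y)) := T.prodCongr (S.prodCongr S) with hQdef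
    have hQN : Q ⁻¹' N = N := by
      ext p
      constructor
      · rintro ⟨ha, hb⟩
        exact ⟨(hWmem (p.1, p.2.1)).mp ha, (hWmem (p.1, p.2.2)).mp hb⟩
      · rintro ⟨ha, hb⟩
        exact ⟨(hWmem (p.1, p.2.1)).mpr ha, (hWmem (p.1, p.2.2)).mpr hb⟩
    have hNQ : Q '' N = N := by
      conv_lhs => rw [← hQN]
      exact Set.image_preimage_eq N Q.surjective
    set A : Set (Y × Y) := Prod.snd '' N with hAdef
    have hAc : IsClosed A := (hNc.isCompact.image continuous_snd).isClosed
    have hAinv : (S.prodCongr S) '' A = A := by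
      rw [hAdef]
      conv_rhs => rw [← hNQ]
      rw [Set.image_image, Set.image_image]
      rfl
    have hyA : (y₀, y₀') ∈ A := ⟨(x₀, (y₀, y₀')), ⟨h1, h2⟩, rfl⟩
    have hΓA : graphPow S n ⊆ A := hΓ.trans (orbitCl_subset hAc hAinv hyA)
    -- the shifted set W'
    set φ : (X × Y) ≃ₜ (X × Y) := (Homeomorph.refl X).prodCongr (S ^ n) with hφdef
    set W' : Set (X × Y) := φ ⁻¹' W with hW'def
    have hW'c : IsClosed W' := hWc.preimage φ.continuous
    have hcomm : ∀ y : Y, S ((S ^ n) y) = (S ^ n) (S y) := fun y =>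
      congrArg (fun g : Y ≃ₜ Y => g y) (Commute.self_zpow S n)
    have hφR : ∀ p, φ (R p) = R (φ p) := fun p => Prod.ext rfl (hcomm p.2).symm
    have hCRφ : Commute R φ := Homeomorph.ext fun p => (hφR p).symm
    have hW'inv : R '' W' = W' := by
      have hpre : R ⁻¹' W' = W' := by
        ext p
        show φ (R p) ∈ W ↔ φ p ∈ W
        rw [hφR p]
        exact hWmem (φ p)
      conv_lhs => rw [← hpre]
      exact Set.image_preimage_eq W' R.surjective
    -- a common point of W and W'
    have hγ : ((S ^ n) y₀, y₀) ∈ graphPow S n := ⟨y₀, rfl⟩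
    obtain ⟨p, hpN, hp2⟩ := hΓA hγ
    have hq1 : (p.1, (S ^ n) y₀) ∈ W := by
      have := hpN.1
      rwa [show p.2.1 = (S ^ n) y₀ from congrArg Prod.fst hp2] at this
    have hq2 : (p.1, y₀) ∈ W := by
      have := hpN.2
      rwa [show p.2.2 = y₀ from congrArg Prod.snd hp2] at this
    set q : X × Y := (p.1, y₀) with hqdef
    have hqW : q ∈ W := hq2
    have hφq : φ q ∈ W := hq1
    have hqW' : q ∈ W' := hφq
    -- W = W'
    have hWsub : W ⊆ W' :=
      (hWd q hqW).trans (orbitCl_subset hW'c hW'inv hqW')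
    have hW'sub : W' ⊆ W := by
      have hdense : W' ⊆ closure {r | ∃ m : ℤ, (R ^ m) q = r} := by
        have h1 : W ⊆ closure {r | ∃ m : ℤ, (R ^ m) (φ q) = r} := hWd (φ q) hφq
        have h2 : φ ⁻¹' {r | ∃ m : ℤ, (R ^ m) (φ q) = r} = {r | ∃ m : ℤ, (R ^ m) q = r} := by
          ext r
          show (∃ m : ℤ, (R ^ m) (φ q) = φ r) ↔ _
          constructor
          · rintro ⟨m, hm⟩
            refine ⟨m, φ.injective ?_⟩
            rw [← hm]
            exact congrArg (fun g : (X × Y) ≃ₜ (X × Y) => g q) (hCRφ.zpow_left m).symm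
          · rintro ⟨m, hm⟩
            refine ⟨m, ?_⟩
            rw [← hm]
            exact congrArg (fun g : (X × Y) ≃ₜ (X × Y) => g q) (hCRφ.zpow_left m)
        calc W' ⊆ φ ⁻¹' closure {r | ∃ m : ℤ, (R ^ m) (φ q) = r} :=
              fun r hr => h1 hr
          _ = closure (φ ⁻¹' {r | ∃ m : ℤ, (R ^ m) (φ q) = r}) := (φ.preimage_closure _)
          _ = closure {r | ∃ m : ℤ, (R ^ m) q = r} := by rw [h2]
      exact hdense.trans (orbitCl_subset hWc hWi hqW)
    have hWW' : W = W' := hWsub.antisymm hW'sub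
    -- key fiber equivalence
    have hkey : ∀ x y, (x, y) ∈ W ↔ (x, (S ^ n) y) ∈ W := by
      intro x y
      constructor
      · intro h
        exact hWsub h
      · intro h
        exact hW'sub h
    -- fibers are full by minimality of S ^ n
    have hfiber : ∀ x : X, {y : Y | (x, y) ∈ W} = Set.univ := by
      intro x
      refine minimal_closed_inv (hStot n hn0)
        (hWc.preimage (by fun_prop : Continuous fun y : Y => (x, y))) ?_ ?_
      · ext z
        constructor
        · rintro ⟨y, hy, rfl⟩
          exact (hkey x y).mp hy
        · intro hz
          refine ⟨(S ^ n).symm z, ?_, (S ^ n).apply_symm_apply z⟩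
          show (x, (S ^ n).symm z) ∈ W
          rw [hkey x ((S ^ n).symm z), (S ^ n).apply_symm_apply]
          exact hz
      · have : x ∈ Prod.fst '' W := hWfst ▸ Set.mem_univ x
        obtain ⟨r, hrW, hrx⟩ := this
        refine ⟨r.2, ?_⟩
        show (x, r.2) ∈ W
        rw [show (x, r.2) = r from Prod.ext hrx.symm rfl]
        exact hrW
    apply Set.eq_univ_of_forall
    rintro ⟨x, y⟩
    have : y ∈ {y : Y | (x, y) ∈ W} := (hfiber x) ▸ Set.mem_univ y
    exact hWM this
  · -- W is the graph of a factor map: contradiction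
    exfalso
    apply hnf
    have huniq : ∀ x : X, ∃! y : Y, (x, y) ∈ W := by
      intro x
      have : x ∈ Prod.fst '' W := hWfst ▸ Set.mem_univ x
      obtain ⟨r, hrW, hrx⟩ := this
      have hxr : (x, r.2) ∈ W := by
        rw [show (x, r.2) = r from Prod.ext hrx.symm rfl]; exact hrW
      refine ⟨r.2, hxr, ?_⟩
      intro y hy
      by_contra hne
      exact hgr ⟨x, y, r.2, hne, hy, hxr⟩
    choose π hπ hπu using huniq
    refine ⟨π, ?_, ?_, ?_⟩
    · rw [continuous_iff_isClosed]
      intro C hC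
      have heq : π ⁻¹' C = Prod.fst '' (W ∩ (Set.univ ×ˢ C)) := by
        ext x
        constructor
        · intro hx
          exact ⟨(x, π x), ⟨hπ x, Set.mem_univ x, hx⟩, rfl⟩
        · rintro ⟨r, ⟨hrW, -, hrC⟩, hrx⟩
          have hxr : (x, r.2) ∈ W := by
            rw [show (x, r.2) = r from Prod.ext hrx.symm rfl]; exact hrW
          have : r.2 = π x := hπu x r.2 hxr
          show π x ∈ C
          rwa [← this]
      rw [heq]
      exact ((hWc.inter (isClosed_univ.prod hC)).isCompact.image continuous_fst).isClosed
    · intro y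
      have : y ∈ Prod.snd '' W := hWsnd ▸ Set.mem_univ y
      obtain ⟨r, hrW, hry⟩ := this
      refine ⟨r.1, ?_⟩
      rw [← hry]
      exact (hπu r.1 r.2 hrW).symm
    · intro x
      have : R (x, π x) ∈ W := (hWmem (x, π x)).mpr (hπ x)
      have h2 : (T x, S (π x)) ∈ W := this
      exact (hπu (T x) (S (π x)) h2).symm
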